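/- (Theorem 1(ii), inclusion X^3_L ⊆ X^2_L) If x : V × {1,…,ℓ} → [0,1] satisfies Σ_{v∈V} x(v,s) = 1 for all s and the aggregated inequalities Σ_{v∈V\V(v0)} x(v,s) ≤ Σ_{v∈V\V(v0)} x(v,s+1) for all v0 ∈ V and 1 ≤ s < ℓ, then it satisfies the pairwise inequalities x(v0,s) + Σ_{v∈V(v0)} x(v,s0) ≤ 1, and in particular x(v0,s) + x(v,s0) ≤ 1 for all v ∈ V(v0) and 1 ≤ s < s0 ≤ ℓ. -/
import Mathlib


/-- Theorem 1(ii), inclusion `X³_L ⊆ X²_L`: if a fractional assignment `x ∈ [0,1]` satisfies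
the assignment constraints and the aggregated inequalities, then for all `v0 ∈ V` and
`1 ≤ s < s0 ≤ ℓ` it satisfies `x(v0,s) + Σ_{v∈V(v0)} x(v,s0) ≤ 1`, and in particular
`x(v0,s) + x(v,s0) ≤ 1` for all `v ∈ V(v0)`. -/
theorem fractional_aggregated_implies_pairwise {I : Type*} [DecidableEq I]
    (L : I → I → Prop) [DecidableRel (Relation.ReflTransGen L)] (V : Finset I) (ℓ : ℕ)
    (x : I → ℕ → ℝ)
    (hbox : ∀ v ∈ V, ∀ s, 0 ≤ x v s ∧ x v s ≤ 1)
    (hassign : ∀ s, 1 ≤ s → s ≤ ℓ → ∑ v ∈ V, x v s = 1)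
    (hagg : ∀ v0 ∈ V, ∀ s, 1 ≤ s → s < ℓ →
      ∑ v ∈ V.filter (fun v => v = v0 ∨ Relation.ReflTransGen L v0 v), x v s
        ≤ ∑ v ∈ V.filter (fun v => v = v0 ∨ Relation.ReflTransGen L v0 v), x v (s + 1)) :
    ∀ v0 ∈ V, ∀ s s0, 1 ≤ s → s < s0 → s0 ≤ ℓ →
      (x v0 s + ∑ v ∈ V.filter (fun v => v ≠ v0 ∧ ¬ Relation.ReflTransGen L v0 v), x v s0
          ≤ 1) ∧
      (∀ v ∈ V, v ≠ v0 → ¬ Relation.ReflTransGen L v0 v → x v0 s + x v s0 ≤ 1) := by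
  intro v0 hv0 s s0 hs hss0 hs0ℓ
  set A := V.filter (fun v => v = v0 ∨ Relation.ReflTransGen L v0 v) with hA
  set B := V.filter (fun v => v ≠ v0 ∧ ¬ Relation.ReflTransGen L v0 v) with hB
  -- telescoping: sum over A nondecreasing in s
  have mono : ∀ t, s ≤ t → t ≤ ℓ → ∑ v ∈ A, x v s ≤ ∑ v ∈ A, x v t := by
    intro t
    induction t with
    | zero => intro h1 _; omega
    | succ n ih =>
      intro h1 h2
      rcases Nat.lt_or_ge s (n+1) with h | h
      · have hn : s ≤ n := Nat.lt_succ_iff.mp h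
        calc ∑ v ∈ A, x v s ≤ ∑ v ∈ A, x v n := ih hn (by omega)
          _ ≤ ∑ v ∈ A, x v (n+1) := hagg v0 hv0 n (by omega) (by omega)
      · have : s = n + 1 := by omega
        simp [this]
  have key : ∑ v ∈ A, x v s ≤ ∑ v ∈ A, x v s0 := mono s0 (le_of_lt hss0) hs0ℓ
  have hv0A : v0 ∈ A := by simp [hA]; exact hv0
  have hx0 : x v0 s ≤ ∑ v ∈ A, x v s := by
    apply Finset.single_le_sum (fun v hv => (hbox v (Finset.mem_filter.mp hv).1 s).1) hv0A
  have hsplit : ∑ v ∈ A, x v s0 + ∑ v ∈ B, x v s0 = 1 := by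
    rw [← hassign s0 (by omega) hs0ℓ]
    rw [← Finset.sum_filter_add_sum_filter_not V
      (fun v => v = v0 ∨ Relation.ReflTransGen L v0 v) (fun v => x v s0)]
    congr 1
    apply Finset.sum_congr _ (fun _ _ => rfl)
    ext v
    simp [hB, not_or, and_comm]
  have main : x v0 s + ∑ v ∈ B, x v s0 ≤ 1 := by
    calc x v0 s + ∑ v ∈ B, x v s0 ≤ ∑ v ∈ A, x v s + ∑ v ∈ B, x v s0 := by linarith
      _ ≤ ∑ v ∈ A, x v s0 + ∑ v ∈ B, x v s0 := by linarith
      _ = 1 := hsplit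
  refine ⟨main, fun v hv hne hnr => ?_⟩
  have hvB : v ∈ B := by simp [hB]; exact ⟨hv, hne, hnr⟩
  have : x v s0 ≤ ∑ w ∈ B, x w s0 :=
    Finset.single_le_sum (fun w hw => (hbox w (Finset.mem_filter.mp hw).1 s0).1) hvB
  linarith
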